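/- Let ε and Z be random variables with E[ε] = 0, |ε| ≤ M almost surely, and Z taking values in [z_L, z_H]. Then ∫_{z_L}^{z_H} E[Var(E[1{Z ≤ z} | σ(ε)])] dz ≥ Cov(ε, Z)² / ((z_H - z_L) · M²), where the variance is over the conditional expectation given ε. -/

import Mathlib

open MeasureTheory ProbabilityTheory

/-- Cauchy–Schwarz inequality for integrals, via the discriminant trick. -/
lemma cs_integral_aux {α : Type*} {mα : MeasurableSpace α} (μ : Measure α) (u v : α → ℝ)
    (hu2 : Integrable (fun a => u a ^ 2) μ) (hv2 : Integrable (fun a => v a ^ 2) μ)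
    (huv : Integrable (fun a => u a * v a) μ) :
    (∫ a, u a * v a ∂μ) ^ 2 ≤ (∫ a, u a ^ 2 ∂μ) * (∫ a, v a ^ 2 ∂μ) := by
  set A := ∫ a, u a ^ 2 ∂μ with hA
  set B := ∫ a, u a * v a ∂μ with hB
  set C := ∫ a, v a ^ 2 ∂μ with hC
  have key : ∀ t : ℝ, 0 ≤ A * (t * t) + (2 * B) * t + C := by
    intro t
    have h0 : 0 ≤ ∫ a, (t * u a + v a) ^ 2 ∂μ := integral_nonneg fun a => sq_nonneg _
    have hexp : ∫ a, (t * u a + v a) ^ 2 ∂μ = A * (t * t) + (2 * B) * t + C := by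
      have hfun : (fun a => (t * u a + v a) ^ 2)
          = fun a => (t * t) * (u a ^ 2) + ((2 * t) * (u a * v a) + v a ^ 2) := by
        funext a; ring
      have hI1 : Integrable (fun a => (2 * t) * (u a * v a) + v a ^ 2) μ :=
        (huv.const_mul _).add hv2
      rw [hfun, integral_add (hu2.const_mul _) hI1,
        integral_add (huv.const_mul _) hv2, integral_const_mul, integral_const_mul,
        ← hA, ← hB, ← hC]
      ring
    linarith [hexp ▸ h0]
  have hd := discrim_le_zero key
  rw [discrim] at hd
  nlinarith [hd]

/-- A measurable a.e.-bounded function is integrable w.r.t. a finite measure. -/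
lemma integrable_of_bdd_aux {α : Type*} {mα : MeasurableSpace α} {μ : Measure α}
    [IsFiniteMeasure μ] {f : α → ℝ} (hf : AEStronglyMeasurable f μ) {C : ℝ}
    (h : ∀ᵐ a ∂μ, |f a| ≤ C) : Integrable f μ :=
  (MemLp.of_bound hf C (by simpa [Real.norm_eq_abs] using h)).integrable le_rfl


/-- Fubini step: `∫_{zL}^{zH} E[ε · 1{Z ≤ z}] dz = -E[ε Z]` when `E[ε] = 0`. -/
lemma fubini_aux {Ω : Type*} {m0 : MeasurableSpace Ω} (μ : Measure Ω) [IsProbabilityMeasure μ]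
    (ε Z : Ω → ℝ) (M zL zH : ℝ) (hM : 0 < M) (hz : zL < zH)
    (hε : Measurable ε) (hZ : Measurable Z)
    (hεbd : ∀ᵐ ω ∂μ, |ε ω| ≤ M)
    (hZbd : ∀ ω, Z ω ∈ Set.Icc zL zH)
    (hmean : ∫ ω, ε ω ∂μ = 0) :
    (∫ z in zL..zH, ∫ ω, ε ω * (if Z ω ≤ z then (1:ℝ) else 0) ∂μ)
      = - ∫ ω, ε ω * Z ω ∂μ := by
  set h : ℝ → Ω → ℝ := fun z ω => if Z ω ≤ z then (1:ℝ) else 0 with hh_def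
  have hh01 : ∀ z ω, 0 ≤ h z ω ∧ h z ω ≤ 1 := by
    intro z ω; by_cases hc : Z ω ≤ z <;> simp [hh_def, hc]
  have hhabs : ∀ z ω, |h z ω| ≤ 1 := by
    intro z ω
    rcases hh01 z ω with ⟨h0, h1⟩
    rw [abs_of_nonneg h0]; exact h1
  have hhmono : ∀ {z z' : ℝ}, z ≤ z' → ∀ ω, h z ω ≤ h z' ω := by
    intro z z' hzz ω
    by_cases hc : Z ω ≤ z
    · simp [hh_def, hc, hc.trans hzz]
    · simp only [hh_def, if_neg hc]
      exact (hh01 z' ω).1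
  have hεint : Integrable ε μ := integrable_of_bdd_aux hε.aestronglyMeasurable hεbd
  have hZint : Integrable Z μ := by
    refine integrable_of_bdd_aux hZ.aestronglyMeasurable (C := |zL| + |zH|)
      (ae_of_all _ fun ω => ?_)
    obtain ⟨hω1, hω2⟩ := hZbd ω
    rw [abs_le]
    constructor
    · calc -(|zL| + |zH|) ≤ -|zL| := by linarith [abs_nonneg zH]
        _ ≤ zL := neg_abs_le zL
        _ ≤ Z ω := hω1
    · calc Z ω ≤ zH := hω2
        _ ≤ |zH| := le_abs_self zH
        _ ≤ |zL| + |zH| := by linarith [abs_nonneg zL]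
  have hεZint : Integrable (fun ω => ε ω * Z ω) μ :=
    Integrable.bdd_mul (c := M) hZint hε.aestronglyMeasurable
      (by filter_upwards [hεbd] with ω hω; simpa [Real.norm_eq_abs] using hω)
  set ν : Measure ℝ := volume.restrict (Set.Ioc zL zH) with hν_def
  haveI hνfin : IsFiniteMeasure ν := by
    constructor
    rw [hν_def, Measure.restrict_apply_univ, Real.volume_Ioc]
    try exact ENNReal.ofReal_lt_top
  have hA : ∀ ω, (∫ z in zL..zH, h z ω) = zH - Z ω := by
    intro ω
    obtain ⟨hω1, hω2⟩ := hZbd ω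
    have hmono : Monotone fun z => h z ω := fun a b hab => hhmono hab ω
    have h1 : IntervalIntegrable (fun z => h z ω) volume zL (Z ω) :=
      hmono.intervalIntegrable
    have h2 : IntervalIntegrable (fun z => h z ω) volume (Z ω) zH :=
      hmono.intervalIntegrable
    rw [← intervalIntegral.integral_add_adjacent_intervals h1 h2]
    have e1 : (∫ z in zL..Z ω, h z ω) = 0 := by
      have hne : ∀ᵐ z : ℝ, z ≠ Z ω := by
        rw [ae_iff]
        simp only [ne_eq, not_not, Set.setOf_eq_eq_singleton]
        exact measure_singleton _
      have hcong : ∀ᵐ z : ℝ, z ∈ Set.uIoc zL (Z ω) → h z ω = (0:ℝ) := by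
        filter_upwards [hne] with z hzne hzmem
        rw [Set.uIoc_of_le hω1] at hzmem
        have hlt : z < Z ω := lt_of_le_of_ne hzmem.2 hzne
        show (if Z ω ≤ z then (1:ℝ) else 0) = 0
        rw [if_neg (not_le.2 hlt)]
      rw [intervalIntegral.integral_congr_ae hcong, intervalIntegral.integral_zero]
    have e2 : (∫ z in Z ω..zH, h z ω) = zH - Z ω := by
      have hcong : Set.EqOn (fun z => h z ω) (fun _ => (1:ℝ)) (Set.uIcc (Z ω) zH) := by
        intro z hzmem
        rw [Set.uIcc_of_le hω2] at hzmem
        show (if Z ω ≤ z then (1:ℝ) else 0) = 1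
        rw [if_pos hzmem.1]
      rw [intervalIntegral.integral_congr hcong, intervalIntegral.integral_const,
        smul_eq_mul, mul_one]
    rw [e1, e2, zero_add]
  have hprodint : Integrable (Function.uncurry fun (z:ℝ) (ω:Ω) => ε ω * h z ω)
      (ν.prod μ) := by
    have hmeasp : Measurable (Function.uncurry fun (z:ℝ) (ω:Ω) => ε ω * h z ω) := by
      refine Measurable.mul (hε.comp measurable_snd) ?_
      exact Measurable.ite
        (measurableSet_le (hZ.comp measurable_snd) measurable_fst)
        measurable_const measurable_const
    refine integrable_of_bdd_aux hmeasp.aestronglyMeasurable (C := M) ?_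
    rw [ae_iff]
    refine measure_mono_null (t := {p : ℝ × Ω | ¬ |ε p.2| ≤ M}) ?_ ?_
    · intro p hp
      simp only [Set.mem_setOf_eq] at hp ⊢
      intro hcon
      apply hp
      show |ε p.2 * h p.1 p.2| ≤ M
      rw [abs_mul]
      calc |ε p.2| * |h p.1 p.2| ≤ M * 1 :=
            mul_le_mul hcon (hhabs p.1 p.2) (abs_nonneg _) hM.le
        _ = M := mul_one M
    · have hspl : {p : ℝ × Ω | ¬ |ε p.2| ≤ M}
          = Set.univ ×ˢ {ω | ¬ |ε ω| ≤ M} := by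
        ext p; simp
      rw [hspl, Measure.prod_prod, ae_iff.1 hεbd, mul_zero]
  calc (∫ z in zL..zH, ∫ ω, ε ω * h z ω ∂μ)
      = ∫ z, (∫ ω, ε ω * h z ω ∂μ) ∂ν := by
        rw [intervalIntegral.integral_of_le hz.le, hν_def]
    _ = ∫ ω, (∫ z, ε ω * h z ω ∂ν) ∂μ := integral_integral_swap hprodint
    _ = ∫ ω, ε ω * (zH - Z ω) ∂μ := by
        refine integral_congr_ae (ae_of_all _ fun ω => ?_)
        show (∫ z, ε ω * h z ω ∂ν) = ε ω * (zH - Z ω)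
        rw [integral_const_mul]
        congr 1
        calc (∫ z, h z ω ∂ν) = ∫ z in zL..zH, h z ω := by
              rw [intervalIntegral.integral_of_le hz.le, hν_def]
          _ = zH - Z ω := hA ω
    _ = - ∫ ω, ε ω * Z ω ∂μ := by
        have hfun : (fun ω => ε ω * (zH - Z ω))
            = fun ω => zH * ε ω - ε ω * Z ω := by funext ω; ring
        rw [hfun, integral_sub (hεint.const_mul zH) hεZint, integral_const_mul,
          hmean, mul_zero, zero_sub]

/-- If `E[ε] = 0`, `|ε| ≤ M` a.s., and `Z ∈ [zL, zH]`, then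
`∫_{zL}^{zH} Var(E[1{Z ≤ z} | σ(ε)]) dz ≥ Cov(ε, Z)² / ((zH - zL)·M²)`. -/
theorem integral_variance_condexp_indicator_ge
    {Ω : Type*} {m0 : MeasurableSpace Ω} (μ : Measure Ω) [IsProbabilityMeasure μ]
    (ε Z : Ω → ℝ) (M zL zH : ℝ) (hM : 0 < M) (hz : zL < zH)
    (hε : Measurable ε) (hZ : Measurable Z)
    (hεbd : ∀ᵐ ω ∂μ, |ε ω| ≤ M)
    (hZbd : ∀ ω, Z ω ∈ Set.Icc zL zH)
    (hmean : ∫ ω, ε ω ∂μ = 0) :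
    (∫ z in zL..zH,
        variance (μ[fun ω => (if Z ω ≤ z then (1:ℝ) else 0)
          | MeasurableSpace.comap ε Real.measurableSpace]) μ)
      ≥ ((∫ ω, ε ω * Z ω ∂μ) - (∫ ω, ε ω ∂μ) * (∫ ω, Z ω ∂μ)) ^ 2
          / ((zH - zL) * M ^ 2) := by
  set m : MeasurableSpace Ω := MeasurableSpace.comap ε Real.measurableSpace with hm_def
  have hm : m ≤ m0 := hε.comap_le
  haveI : SigmaFinite (μ.trim hm) := inferInstance
  -- the indicator functions
  set h : ℝ → Ω → ℝ := fun z ω => if Z ω ≤ z then (1:ℝ) else 0 with hh_def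
  have hhmeas : ∀ z, Measurable[m0] (h z) := fun z =>
    Measurable.ite (hZ measurableSet_Iic) measurable_const measurable_const
  have hh01 : ∀ z ω, 0 ≤ h z ω ∧ h z ω ≤ 1 := by
    intro z ω; by_cases hc : Z ω ≤ z <;> simp [hh_def, hc]
  have hhabs : ∀ z ω, |h z ω| ≤ 1 := by
    intro z ω
    rcases hh01 z ω with ⟨h0, h1⟩
    rw [abs_of_nonneg h0]; exact h1
  have hhint : ∀ z, Integrable (h z) μ :=
    fun z => integrable_of_bdd_aux (hhmeas z).aestronglyMeasurable (ae_of_all _ (hhabs z))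
  -- basic integrability of ε
  have hεint : Integrable ε μ := integrable_of_bdd_aux hε.aestronglyMeasurable hεbd
  have hε2int : Integrable (fun ω => ε ω ^ 2) μ := by
    refine integrable_of_bdd_aux (hε.pow_const 2).aestronglyMeasurable (C := M ^ 2) ?_
    filter_upwards [hεbd] with ω hω
    rw [abs_pow]
    exact pow_le_pow_left₀ (abs_nonneg _) hω 2
  have hε2le : ∫ ω, ε ω ^ 2 ∂μ ≤ M ^ 2 := by
    calc ∫ ω, ε ω ^ 2 ∂μ ≤ ∫ _ω, M ^ 2 ∂μ := by
          refine integral_mono_ae hε2int (integrable_const _) ?_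
          filter_upwards [hεbd] with ω hω
          calc ε ω ^ 2 = |ε ω| ^ 2 := (sq_abs _).symm
            _ ≤ M ^ 2 := pow_le_pow_left₀ (abs_nonneg _) hω 2
      _ = M ^ 2 := by simp
  have hεhint : ∀ z, Integrable (fun ω => ε ω * h z ω) μ := by
    intro z
    refine integrable_of_bdd_aux (hε.mul (hhmeas z)).aestronglyMeasurable (C := M) ?_
    filter_upwards [hεbd] with ω hω
    rw [abs_mul]
    calc |ε ω| * |h z ω| ≤ M * 1 := mul_le_mul hω (hhabs z ω) (abs_nonneg _) hM.le
      _ = M := mul_one M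
  -- `ε` is strongly measurable w.r.t. `m`
  have hεm : StronglyMeasurable[m] ε := by
    have hmeas : @Measurable Ω ℝ m _ ε := fun s hs => ⟨s, hs, rfl⟩
    exact hmeas.stronglyMeasurable
  -- the covariance-vs-variance key step, for each z
  have key : ∀ z : ℝ, (∫ ω, ε ω * h z ω ∂μ) ^ 2 ≤ M ^ 2 * variance (μ[h z | m]) μ := by
    intro z
    set g : Ω → ℝ := μ[h z | m] with hg_def
    have hgint : Integrable g μ := integrable_condExp
    have hgbd : ∀ᵐ ω ∂μ, |g ω| ≤ (1:ℝ) := by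
      have := ae_bdd_condExp_of_ae_bdd (m := m) (μ := μ) (R := 1) (f := h z)
        (ae_of_all _ (by simpa using hhabs z))
      simpa using this
    have hgmem : MemLp g 2 μ :=
      MemLp.of_bound hgint.aestronglyMeasurable 1
        (by filter_upwards [hgbd] with ω hω; simpa [Real.norm_eq_abs] using hω)
    set c : ℝ := ∫ ω, g ω ∂μ with hc_def
    have hεg : ∫ ω, ε ω * g ω ∂μ = ∫ ω, ε ω * h z ω ∂μ := by
      have hmul : μ[(fun ω => ε ω * h z ω) | m] =ᵐ[μ] fun ω => ε ω * g ω := by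
        have := condExp_mul_of_stronglyMeasurable_left (μ := μ) hεm
          (f := ε) (g := h z) (hεhint z) (hhint z)
        exact this
      calc ∫ ω, ε ω * g ω ∂μ = ∫ ω, (μ[(fun ω => ε ω * h z ω) | m]) ω ∂μ :=
            (integral_congr_ae hmul).symm
        _ = ∫ ω, ε ω * h z ω ∂μ := integral_condExp hm
    have hgcint : Integrable (fun ω => g ω - c) μ := hgint.sub (integrable_const c)
    have hεgcint : Integrable (fun ω => ε ω * (g ω - c)) μ :=
      Integrable.bdd_mul (c := M) hgcint hε.aestronglyMeasurable
        (by filter_upwards [hεbd] with ω hω; simpa [Real.norm_eq_abs] using hω)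
    have hgc2int : Integrable (fun ω => (g ω - c) ^ 2) μ := by
      refine integrable_of_bdd_aux ?_ (C := (1 + |c|) ^ 2) ?_
      · exact ((hgint.aestronglyMeasurable.sub aestronglyMeasurable_const).pow 2)
      · filter_upwards [hgbd] with ω hω
        rw [abs_pow]
        refine pow_le_pow_left₀ (abs_nonneg _) ?_ 2
        calc |g ω - c| ≤ |g ω| + |c| := abs_sub _ _
          _ ≤ 1 + |c| := by linarith
    have hεgc : ∫ ω, ε ω * (g ω - c) ∂μ = ∫ ω, ε ω * h z ω ∂μ := by
      have hfun : (fun ω => ε ω * (g ω - c)) = fun ω => ε ω * g ω - c * ε ω := by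
        funext ω; ring
      have hεgint2 : Integrable (fun ω => ε ω * g ω) μ := by
        refine Integrable.bdd_mul (c := M) hgint hε.aestronglyMeasurable ?_
        filter_upwards [hεbd] with ω hω; simpa [Real.norm_eq_abs] using hω
      rw [hfun, integral_sub hεgint2 (hεint.const_mul c), integral_const_mul, hmean, hεg]
      ring
    have hvar : variance g μ = ∫ ω, (g ω - c) ^ 2 ∂μ := by
      rw [variance_eq_integral hgmem.aestronglyMeasurable.aemeasurable]
    have hcs := cs_integral_aux μ ε (fun ω => g ω - c) hε2int hgc2int hεgcint
    rw [hεgc] at hcs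
    calc (∫ ω, ε ω * h z ω ∂μ) ^ 2
        ≤ (∫ ω, ε ω ^ 2 ∂μ) * ∫ ω, (g ω - c) ^ 2 ∂μ := hcs
      _ ≤ M ^ 2 * ∫ ω, (g ω - c) ^ 2 ∂μ := by
          refine mul_le_mul_of_nonneg_right hε2le (integral_nonneg fun ω => sq_nonneg _)
      _ = M ^ 2 * variance g μ := by rw [hvar]

  -- the covariance function f
  set f : ℝ → ℝ := fun z => ∫ ω, ε ω * h z ω ∂μ with hf_def
  have hhmono : ∀ {z z' : ℝ}, z ≤ z' → ∀ ω, h z ω ≤ h z' ω := by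
    intro z z' hzz ω
    by_cases hc : Z ω ≤ z
    · simp [hh_def, hc, hc.trans hzz]
    · simp only [hh_def, if_neg hc]
      exact (hh01 z' ω).1
  have hfmeas : Measurable[_] f := by
    have hp : Measurable[m0] (fun ω => max (ε ω) 0) := hε.max measurable_const
    have hn : Measurable[m0] (fun ω => max (-ε ω) 0) := hε.neg.max measurable_const
    have hpbd : ∀ᵐ ω ∂μ, ‖max (ε ω) 0‖ ≤ M := by
      filter_upwards [hεbd] with ω hω
      rw [Real.norm_eq_abs, abs_of_nonneg (le_max_right _ _)]
      exact max_le ((le_abs_self _).trans hω) hM.le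
    have hnbd : ∀ᵐ ω ∂μ, ‖max (-ε ω) 0‖ ≤ M := by
      filter_upwards [hεbd] with ω hω
      rw [Real.norm_eq_abs, abs_of_nonneg (le_max_right _ _)]
      exact max_le ((neg_le_abs _).trans hω) hM.le
    have hpint : ∀ z, Integrable (fun ω => max (ε ω) 0 * h z ω) μ := fun z =>
      Integrable.bdd_mul (c := M) (hhint z) hp.aestronglyMeasurable hpbd
    have hnint : ∀ z, Integrable (fun ω => max (-ε ω) 0 * h z ω) μ := fun z =>
      Integrable.bdd_mul (c := M) (hhint z) hn.aestronglyMeasurable hnbd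
    have hpm : Monotone (fun z => ∫ ω, max (ε ω) 0 * h z ω ∂μ) := by
      intro z z' hzz
      exact integral_mono (hpint z) (hpint z') fun ω =>
        mul_le_mul_of_nonneg_left (hhmono hzz ω) (le_max_right _ _)
    have hnm : Monotone (fun z => ∫ ω, max (-ε ω) 0 * h z ω ∂μ) := by
      intro z z' hzz
      exact integral_mono (hnint z) (hnint z') fun ω =>
        mul_le_mul_of_nonneg_left (hhmono hzz ω) (le_max_right _ _)
    have hfd : f = fun z => (∫ ω, max (ε ω) 0 * h z ω ∂μ)
        - ∫ ω, max (-ε ω) 0 * h z ω ∂μ := by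
      funext z
      show (∫ ω, ε ω * h z ω ∂μ) = _
      rw [← integral_sub (hpint z) (hnint z)]
      refine integral_congr_ae (ae_of_all _ fun ω => ?_)
      show ε ω * h z ω = max (ε ω) 0 * h z ω - max (-ε ω) 0 * h z ω
      rw [← sub_mul, max_zero_sub_max_neg_zero_eq_self]
    rw [hfd]
    exact hpm.measurable.sub hnm.measurable
  have hfbd : ∀ z, |f z| ≤ M := by
    intro z
    rw [hf_def]
    calc |∫ ω, ε ω * h z ω ∂μ| ≤ ∫ ω, |ε ω * h z ω| ∂μ := by
          simpa only [Real.norm_eq_abs] using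
            norm_integral_le_integral_norm (μ := μ) (fun ω => ε ω * h z ω)
      _ ≤ ∫ _ω, M ∂μ := by
          refine integral_mono_ae (hεhint z).abs (integrable_const M) ?_
          filter_upwards [hεbd] with ω hω
          rw [abs_mul]
          calc |ε ω| * |h z ω| ≤ M * 1 := mul_le_mul hω (hhabs z ω) (abs_nonneg _) hM.le
            _ = M := mul_one M
      _ = M := by simp
  -- variance as a function of z : measurable and bounded
  have hgbd' : ∀ z, ∀ᵐ ω ∂μ, |(μ[h z | m]) ω| ≤ (1:ℝ) := by
    intro z
    have := ae_bdd_condExp_of_ae_bdd (m := m) (μ := μ) (R := 1) (f := h z)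
      (ae_of_all _ (by simpa using hhabs z))
    simpa using this
  have hg2int : ∀ z, Integrable (fun ω => (μ[h z | m]) ω ^ 2) μ := by
    intro z
    refine integrable_of_bdd_aux
      ((integrable_condExp (f := h z)).aestronglyMeasurable.pow 2) (C := 1) ?_
    filter_upwards [hgbd' z] with ω hω
    rw [abs_pow]
    simpa using pow_le_pow_left₀ (abs_nonneg _) hω 2
  have hI1mono : Monotone (fun z => ∫ ω, h z ω ∂μ) := by
    intro z z' hzz
    exact integral_mono (hhint z) (hhint z') (hhmono hzz)
  have hI2mono : Monotone (fun z => ∫ ω, (μ[h z | m]) ω ^ 2 ∂μ) := by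
    intro z z' hzz
    have hmono' : μ[h z | m] ≤ᵐ[μ] μ[h z' | m] :=
      condExp_mono (hhint z) (hhint z') (ae_of_all _ (hhmono hzz))
    have hnn : (0:Ω → ℝ) ≤ᵐ[μ] μ[h z | m] :=
      condExp_nonneg (ae_of_all _ fun ω => (hh01 z ω).1)
    refine integral_mono_ae (hg2int z) (hg2int z') ?_
    filter_upwards [hmono', hnn] with ω h1 h2
    exact pow_le_pow_left₀ h2 h1 2
  have hgmem' : ∀ z, MemLp (μ[h z | m]) 2 μ := fun z =>
    MemLp.of_bound (integrable_condExp).aestronglyMeasurable 1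
      (by filter_upwards [hgbd' z] with ω hω; simpa [Real.norm_eq_abs] using hω)
  set V : ℝ → ℝ := fun z => variance (μ[h z | m]) μ with hV_def
  have hVeq : ∀ z, V z = (∫ ω, (μ[h z | m]) ω ^ 2 ∂μ) - (∫ ω, h z ω ∂μ) ^ 2 := by
    intro z
    show variance (μ[h z | m]) μ = _
    rw [variance_eq_sub (hgmem' z), integral_condExp hm]
    rfl
  have hVmeas : Measurable[_] V := by
    have : V = fun z => (∫ ω, (μ[h z | m]) ω ^ 2 ∂μ) - (∫ ω, h z ω ∂μ) ^ 2 :=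
      funext hVeq
    rw [this]
    exact hI2mono.measurable.sub (hI1mono.measurable.pow_const 2)
  have hVbd : ∀ z, |V z| ≤ 1 := by
    intro z
    rw [abs_le]
    constructor
    · linarith [variance_nonneg (μ[h z | m]) μ]
    · rw [hVeq z]
      have hle : ∫ ω, (μ[h z | m]) ω ^ 2 ∂μ ≤ 1 := by
        calc ∫ ω, (μ[h z | m]) ω ^ 2 ∂μ ≤ ∫ _ω, (1:ℝ) ∂μ := by
              refine integral_mono_ae (hg2int z) (integrable_const _) ?_
              filter_upwards [hgbd' z] with ω hω
              calc (μ[h z | m]) ω ^ 2 = |(μ[h z | m]) ω| ^ 2 := (sq_abs _).symm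
                _ ≤ 1 ^ 2 := pow_le_pow_left₀ (abs_nonneg _) hω 2
                _ = 1 := one_pow 2
          _ = 1 := by simp
      nlinarith [sq_nonneg (∫ ω, h z ω ∂μ)]
  -- interval integrability
  set ν : Measure ℝ := volume.restrict (Set.Ioc zL zH) with hν_def
  haveI hνfin : IsFiniteMeasure ν := by
    constructor
    rw [hν_def, Measure.restrict_apply_univ, Real.volume_Ioc]
    exact ENNReal.ofReal_lt_top
  have hVint : IntervalIntegrable V volume zL zH := by
    rw [intervalIntegrable_iff_integrableOn_Ioc_of_le hz.le]
    exact integrable_of_bdd_aux hVmeas.aestronglyMeasurable (ae_of_all _ hVbd)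
  have hfint : IntervalIntegrable f volume zL zH := by
    rw [intervalIntegrable_iff_integrableOn_Ioc_of_le hz.le]
    exact integrable_of_bdd_aux hfmeas.aestronglyMeasurable (ae_of_all _ hfbd)
  have hf2int : IntervalIntegrable (fun z => f z ^ 2) volume zL zH := by
    rw [intervalIntegrable_iff_integrableOn_Ioc_of_le hz.le]
    refine integrable_of_bdd_aux (hfmeas.pow_const 2).aestronglyMeasurable
      (C := M ^ 2) (ae_of_all _ fun z => ?_)
    rw [abs_pow]
    exact pow_le_pow_left₀ (abs_nonneg _) (hfbd z) 2
  -- pointwise inequality integrated over [zL, zH]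
  have hmono1 : (∫ z in zL..zH, f z ^ 2 / M ^ 2) ≤ ∫ z in zL..zH, V z := by
    refine intervalIntegral.integral_mono_on hz.le (hf2int.div_const _) hVint
      (fun z _ => ?_)
    rw [div_le_iff₀ (by positivity)]
    exact le_of_le_of_eq (key z) (mul_comm _ _)
  have hswap : (∫ z in zL..zH, f z) = - ∫ ω, ε ω * Z ω ∂μ :=
    fubini_aux μ ε Z M zL zH hM hz hε hZ hεbd hZbd hmean
  -- interval Cauchy–Schwarz
  have hcsI : (∫ z in zL..zH, f z) ^ 2 ≤ (zH - zL) * ∫ z in zL..zH, f z ^ 2 := by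
    have h2 : Integrable (fun z => f z ^ 2) ν :=
      (intervalIntegrable_iff_integrableOn_Ioc_of_le hz.le).1 hf2int
    have h1 : Integrable f ν :=
      (intervalIntegrable_iff_integrableOn_Ioc_of_le hz.le).1 hfint
    have h3 : Integrable (fun z => f z * 1) ν := by simpa using h1
    have hone : Integrable (fun _ : ℝ => (1:ℝ) ^ 2) ν := by
      simpa using (integrable_const (1:ℝ) (μ := ν))
    have hcs := cs_integral_aux ν f (fun _ => 1) h2 hone h3
    have hν1 : (∫ _z, ((1:ℝ)) ^ 2 ∂ν) = zH - zL := by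
      simp only [one_pow]
      rw [integral_const, smul_eq_mul, mul_one, hν_def, measureReal_def, Measure.restrict_apply_univ,
        Real.volume_Ioc, ENNReal.toReal_ofReal (by linarith)]
    have hintf : (∫ z, f z * 1 ∂ν) = ∫ z in zL..zH, f z := by
      simp only [mul_one]
      rw [intervalIntegral.integral_of_le hz.le, hν_def]
    have hintf2 : (∫ z, f z ^ 2 ∂ν) = ∫ z in zL..zH, f z ^ 2 := by
      rw [intervalIntegral.integral_of_le hz.le, hν_def]
    rw [hintf, hν1, hintf2] at hcs
    linarith [hcs]
  -- assembly
  have hQnn : 0 ≤ ∫ z in zL..zH, f z ^ 2 :=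
    intervalIntegral.integral_nonneg hz.le (fun z _ => sq_nonneg _)
  have hEZ : (∫ ω, ε ω * Z ω ∂μ) ^ 2 ≤ (zH - zL) * ∫ z in zL..zH, f z ^ 2 := by
    calc (∫ ω, ε ω * Z ω ∂μ) ^ 2 = (∫ z in zL..zH, f z) ^ 2 := by
          rw [hswap]; ring
      _ ≤ (zH - zL) * ∫ z in zL..zH, f z ^ 2 := hcsI
  have hVT : (∫ z in zL..zH, f z ^ 2) / M ^ 2 ≤ ∫ z in zL..zH, V z := by
    rw [← intervalIntegral.integral_div]
    exact hmono1
  have hQ' : (∫ z in zL..zH, f z ^ 2) ≤ (∫ z in zL..zH, V z) * M ^ 2 :=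
    (div_le_iff₀ (by positivity)).1 hVT
  have hgoal : (∫ z in zL..zH,
      variance (μ[fun ω => (if Z ω ≤ z then (1:ℝ) else 0) | m]) μ)
      = ∫ z in zL..zH, V z := rfl
  rw [ge_iff_le, hmean, zero_mul, sub_zero, hgoal,
    div_le_iff₀ (mul_pos (sub_pos.2 hz) (pow_pos hM 2))]
  nlinarith [hEZ, hQ', hQnn, sub_pos.2 hz,
    mul_le_mul_of_nonneg_left hQ' (sub_pos.2 hz).le]
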